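/- For every real α with 0 < α < 1/2, let ε = 1/10 − α/5 and let b : Fin 5 → ℝ be the bandwidths b 0 = b 1 = 1/2 − 2ε, b 2 = b 3 = 1/2 − ε and b 4 = 4ε, and let r₀ : Fin 4 → Fin 2 be the symmetric assignment r₀ 0 = r₀ 2 = 0, r₀ 1 = r₀ 3 = 1 of the first four flows. Then: (a) r₀ is feasible (each edge load is 1 − 3ε); (b) there exists a feasible assignment of all five flows; (c) for every edge e, the extension of r₀ placing flow 4 on e is not feasible; and (d) every assignment r' : Fin 4 → Fin 2 differing from r₀ at exactly one index has some edge whose load is at least 1 + α. Hence any untimed (one-flow-at-a-time) implementation of the required flow swap oversubscribes some edge by at least α. -/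

import Mathlib

open Finset

/-- The load on edge `e`: the sum of the bandwidths of the flows assigned to `e`. -/
noncomputable def load {ι : Type*} [Fintype ι] {m : ℕ} (b : ι → ℝ) (r : ι → Fin m)
    (e : Fin m) : ℝ :=
  ∑ i ∈ univ.filter (fun i => r i = e), b i

/-- An assignment is feasible if the load of every edge is at most the capacity 1. -/
def Feasible {ι : Type*} [Fintype ι] {m : ℕ} (b : ι → ℝ) (r : ι → Fin m) : Prop :=
  ∀ e, load b r e ≤ 1

lemma load4 (b : Fin 4 → ℝ) (r : Fin 4 → Fin 2) (e : Fin 2) :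
    load b r e = (if r 0 = e then b 0 else 0) + (if r 1 = e then b 1 else 0)
      + (if r 2 = e then b 2 else 0) + (if r 3 = e then b 3 else 0) := by
  simp [load, Finset.sum_filter, Fin.sum_univ_four]

lemma load5 (b : Fin 5 → ℝ) (r : Fin 5 → Fin 2) (e : Fin 2) :
    load b r e = (if r 0 = e then b 0 else 0) + (if r 1 = e then b 1 else 0)
      + (if r 2 = e then b 2 else 0) + (if r 3 = e then b 3 else 0)
      + (if r 4 = e then b 4 else 0) := by
  simp [load, Finset.sum_filter, Fin.sum_univ_five]

theorem stmt7 (α : ℝ) (hα₀ : 0 < α) (hα₁ : α < 1/2) :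
    ∀ ε : ℝ, ε = 1/10 - α/5 →
    ∀ b : Fin 5 → ℝ, b = ![1/2 - 2*ε, 1/2 - 2*ε, 1/2 - ε, 1/2 - ε, 4*ε] →
    ∀ b₄ : Fin 4 → ℝ, b₄ = (fun i => b i.castSucc) →
    ∀ r₀ : Fin 4 → Fin 2, r₀ = ![0, 1, 0, 1] →
      -- (a) `r₀` is feasible; each edge load is `1 - 3ε`
      (Feasible b₄ r₀ ∧ ∀ e : Fin 2, load b₄ r₀ e = 1 - 3*ε) ∧
      -- (b) all five flows admit a feasible assignment
      (∃ r : Fin 5 → Fin 2, Feasible b r) ∧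
      -- (c) placing the new flow on either edge, without rerouting, is infeasible
      (∀ e : Fin 2, ¬ Feasible b (Fin.snoc r₀ e)) ∧
      -- (d) any single-flow reroute oversubscribes some edge by at least `α`
      (∀ r' : Fin 4 → Fin 2, (∃! i, r' i ≠ r₀ i) →
        ∃ e : Fin 2, 1 + α ≤ load b₄ r' e) := by
  intro ε hε b hb b₄ hb₄ r₀ hr₀
  subst hb hr₀
  have hb4 : b₄ = ![1/2 - 2*ε, 1/2 - 2*ε, 1/2 - ε, 1/2 - ε] := by
    rw [hb₄]; funext i; fin_cases i <;> rfl
  subst hb4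
  have hε₀ : 0 < ε := by rw [hε]; linarith
  have hsn : ∀ e : Fin 2,
      (Fin.snoc ![0, 1, 0, 1] e : Fin 5 → Fin 2) = ![0, 1, 0, 1, e] := by
    intro e; fin_cases e <;> decide
  have h2 : ∀ x y : Fin 2, x ≠ y → x = (if y = 0 then 1 else 0) := by decide
  refine ⟨⟨?_, ?_⟩, ?_, ?_, ?_⟩
  · intro e; fin_cases e <;> simp [load4] <;> norm_num <;> linarith
  · intro e; fin_cases e <;> simp [load4] <;> norm_num <;> ring
  · refine ⟨![0, 0, 1, 1, 0], ?_⟩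
    intro e; fin_cases e <;> simp [load5] <;> norm_num <;> linarith
  · intro e hF
    have := hF e
    rw [hsn] at this
    fin_cases e <;> simp [load5] at this <;> norm_num at this <;> linarith [hε, this]
  · intro r' ⟨i, hi, hu⟩
    have hne : ∀ j, j ≠ i → r' j = ![0,1,0,1] j := fun j hj => by
      by_contra hc; exact hj (hu j hc)
    fin_cases i
    · have h0 : r' 0 = 1 := by have := h2 _ _ hi; simpa using this
      have h1 : r' 1 = 1 := by have := hne 1 (by decide); simpa using this
      have h2' : r' 2 = 0 := by have := hne 2 (by decide); simpa using this
      have h3 : r' 3 = 1 := by have := hne 3 (by decide); simpa using this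
      refine ⟨1, ?_⟩; rw [load4, h0, h1, h2', h3]; norm_num; simp only [Matrix.cons_val]; linarith [hε]
    · have h0 : r' 0 = 0 := by have := hne 0 (by decide); simpa using this
      have h1 : r' 1 = 0 := by have := h2 _ _ hi; simpa using this
      have h2' : r' 2 = 0 := by have := hne 2 (by decide); simpa using this
      have h3 : r' 3 = 1 := by have := hne 3 (by decide); simpa using this
      refine ⟨0, ?_⟩; rw [load4, h0, h1, h2', h3]; norm_num; simp only [Matrix.cons_val]; linarith [hε]
    · have h0 : r' 0 = 0 := by have := hne 0 (by decide); simpa using this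
      have h1 : r' 1 = 1 := by have := hne 1 (by decide); simpa using this
      have h2' : r' 2 = 1 := by have := h2 _ _ hi; simpa using this
      have h3 : r' 3 = 1 := by have := hne 3 (by decide); simpa using this
      refine ⟨1, ?_⟩; rw [load4, h0, h1, h2', h3]; norm_num; simp only [Matrix.cons_val]; linarith [hε]
    · have h0 : r' 0 = 0 := by have := hne 0 (by decide); simpa using this
      have h1 : r' 1 = 1 := by have := hne 1 (by decide); simpa using this
      have h2' : r' 2 = 0 := by have := hne 2 (by decide); simpa using this
      have h3 : r' 3 = 0 := by have := h2 _ _ hi; simpa using this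
      refine ⟨0, ?_⟩; rw [load4, h0, h1, h2', h3]; norm_num; simp only [Matrix.cons_val]; linarith [hε]
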